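/- For n ≥ 2 and the matrix L(x₁,…,x_{n-1},y) defined by: rows 1 through n-2 of companion type (row i: -xᵢ in column 1, 1 in column i+1), row n-1 equal to (-x_{n-1}, 0, …, 0, ±2y), and row n equal to (-y/2, 0, …, 0), one has: the coefficients of the characteristic polynomial of L are σ₁ = x₁, …, σ_{n-1} = x_{n-1}, and σₙ = ±y², i.e. det(t·Id - L) = tⁿ + x₁t^{n-1} + ⋯ + x_{n-1}t ± y². -/

import Mathlib

open Matrix Polynomial Finset

lemma hess_det {R : Type*} [CommRing R] (t : R) :
    ∀ (n : ℕ) (a c : ℕ → R),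
    (Matrix.of fun i j : Fin (n+1) =>
      if (j:ℕ) = 0 then a i else if (j:ℕ) = (i:ℕ) + 1 then c i
      else if (j:ℕ) = (i:ℕ) then t else 0).det
    = ∑ k ∈ Finset.range (n+1), (-1)^k * a k * t^(n-k) * ∏ i ∈ Finset.range k, c i := by
  intro n
  induction n with
  | zero =>
    intro a c
    rw [Matrix.det_fin_one]
    simp
  | succ n ih =>
    intro a c
    set M : Matrix (Fin (n+2)) (Fin (n+2)) R := Matrix.of (fun i j : Fin (n+2) =>
      if (j:ℕ) = 0 then a i else if (j:ℕ) = (i:ℕ) + 1 then c i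
      else if (j:ℕ) = (i:ℕ) then t else 0) with hMdef
    rw [Matrix.det_succ_row_zero, Fin.sum_univ_succ, Fin.sum_univ_succ]
    have h0 : ∀ j : Fin n, M 0 j.succ.succ = 0 := by
      intro j
      have hv : ((j.succ.succ : Fin (n+2)) : ℕ) = (j:ℕ) + 2 := by simp
      simp only [hMdef, Matrix.of_apply, hv]
      have h1 : ¬ ((j:ℕ) + 2 = 0) := by omega
      have h2 : ¬ ((j:ℕ) + 2 = ((0:Fin (n+2)):ℕ) + 1) := by simp
      have h3 : ¬ ((j:ℕ) + 2 = ((0:Fin (n+2)):ℕ)) := by simp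
      rw [if_neg h1, if_neg h2, if_neg h3]
    have htail : (∑ j : Fin n, (-1:R) ^ ((j.succ.succ : Fin (n+2)) : ℕ) *
        M 0 j.succ.succ * (M.submatrix Fin.succ (j.succ.succ).succAbove).det) = 0 := by
      apply Finset.sum_eq_zero
      intro j _
      rw [h0 j]; ring
    rw [htail]
    have hM00 : M 0 0 = a 0 := by simp [hMdef]
    have h10 : (Fin.succ (0:Fin (n+1))) = (1:Fin (n+2)) := by
      apply Fin.ext
      simp
    have hM01 : M 0 1 = c 0 := by
      have : ((1 : Fin (n+2)) : ℕ) = 1 := rfl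
      simp [hMdef, this]
    have hminor0 : (M.submatrix Fin.succ ((0 : Fin (n+2)).succAbove)).det = t^(n+1) := by
      rw [Fin.succAbove_zero]
      rw [Matrix.det_of_upperTriangular]
      · have : ∀ i : Fin (n+1), (M.submatrix Fin.succ Fin.succ) i i = t := by
          intro i
          simp only [Matrix.submatrix_apply, hMdef, Matrix.of_apply, Fin.val_succ]
          have h1 : ¬ ((i:ℕ) + 1 = 0) := by omega
          have h2 : ¬ ((i:ℕ) + 1 = (i:ℕ) + 1 + 1) := by omega
          rw [if_neg h1, if_neg h2]
          simp
        rw [Finset.prod_congr rfl (fun i _ => this i)]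
        simp
      · intro i j hij
        simp only [Matrix.submatrix_apply, hMdef, Matrix.of_apply, Fin.val_succ]
        have hji : (j:ℕ) < (i:ℕ) := hij
        have h1 : ¬ ((j:ℕ) + 1 = 0) := by omega
        have h2 : ¬ ((j:ℕ) + 1 = (i:ℕ) + 1 + 1) := by omega
        have h3 : ¬ ((j:ℕ) + 1 = (i:ℕ) + 1) := by omega
        rw [if_neg h1, if_neg h2, if_neg h3]
    have hsa : ∀ j : Fin (n+1), (((1:Fin (n+2)).succAbove j) : ℕ) =
        if (j:ℕ) = 0 then 0 else (j:ℕ)+1 := by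
      intro j
      rcases Nat.eq_zero_or_pos (j:ℕ) with h | h
      · have hj : j = 0 := Fin.ext h
        subst hj
        simp [Fin.succAbove]
      · rw [if_neg (by omega)]
        rw [Fin.succAbove_of_le_castSucc]
        · simp
        · rw [Fin.le_castSucc_iff]
          rw [Fin.lt_def, Fin.val_succ, Fin.val_one]
          omega
    have hminor1 : (M.submatrix Fin.succ ((1 : Fin (n+2)).succAbove)).det =
        ∑ k ∈ Finset.range (n+1), (-1:R)^k * a (k+1) * t^(n-k) * ∏ i ∈ Finset.range k, c (i+1) := by
      have heq : M.submatrix Fin.succ ((1 : Fin (n+2)).succAbove) =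
          Matrix.of (fun i j : Fin (n+1) =>
            if (j:ℕ) = 0 then (fun k => a (k+1)) (i:ℕ) else if (j:ℕ) = (i:ℕ) + 1 then (fun k => c (k+1)) (i:ℕ)
            else if (j:ℕ) = (i:ℕ) then t else 0) := by
        ext i j
        simp only [Matrix.submatrix_apply, hMdef, Matrix.of_apply, Fin.val_succ]
        rw [hsa j]
        split_ifs <;> first | rfl | omega | exact absurd ‹False› not_false
      rw [heq]
      exact ih (fun k => a (k+1)) (fun k => c (k+1))
    simp only [h10, Fin.val_zero, Fin.val_one]
    rw [hM00, hM01, hminor0, hminor1]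
    conv_rhs => rw [Finset.sum_range_succ']
    rw [Finset.mul_sum]
    have hsum : ∀ k ∈ Finset.range (n+1),
        (-1:R)^(1:ℕ) * c 0 * ((-1:R)^k * a (k+1) * t^(n-k) * ∏ i ∈ Finset.range k, c (i+1)) =
        (-1:R)^(k+1) * a (k+1) * t^(n+1-(k+1)) * ∏ i ∈ Finset.range (k+1), c i := by
      intro k _
      rw [Finset.prod_range_succ']
      have hnk : n + 1 - (k+1) = n - k := by omega
      rw [hnk]
      ring
    rw [Finset.sum_congr rfl hsum]
    simp only [pow_zero, one_mul, Nat.sub_zero, Finset.prod_range_zero, mul_one, add_zero]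
    ring


theorem stmt9 (n : ℕ) (hn : 2 ≤ n)
    (ε : ℝ) (hε : ε = 1 ∨ ε = -1)
    (P : ℕ → ℝ) (y : ℝ)
    (L : Matrix (Fin n) (Fin n) ℝ)
    (hL : ∀ i j : Fin n, L i j =
      if i.val < n - 2 then
        (if j.val = 0 then -P i.val else if j.val = i.val + 1 then 1 else 0)
      else if i.val = n - 2 then
        (if j.val = 0 then -P (n - 2) else if j.val = n - 1 then ε * (2 * y) else 0)
      else
        (if j.val = 0 then -(y / 2) else 0)) :
    L.charpoly =
      X ^ n + (∑ i ∈ Finset.range (n - 1), C (P i) * X ^ (n - 1 - i)) + C (ε * y ^ 2) := by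
  obtain ⟨m, rfl⟩ : ∃ m, n = m + 2 := ⟨n - 2, by omega⟩
  have hm2 : m + 2 - 2 = m := by omega
  have hm1 : m + 2 - 1 = m + 1 := by omega
  have hchar : charmatrix L = Matrix.of (fun i j : Fin (m+1+1) =>
      if (j:ℕ) = 0 then
        (fun k => if k = 0 then X + C (P 0) else if k = m+1 then C (y/2) else C (P k)) (i:ℕ)
      else if (j:ℕ) = (i:ℕ) + 1 then
        (fun k => if k = m then -C (ε*(2*y)) else -(1:ℝ[X])) (i:ℕ)
      else if (j:ℕ) = (i:ℕ) then X else 0) := by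
    refine Matrix.ext fun i j => ?_
    simp only [Matrix.charmatrix_apply, Matrix.diagonal_apply, Matrix.of_apply]
    rw [hL i j]
    clear hL
    simp only [hm2, hm1, Fin.ext_iff, Fin.val_zero]
    have hi : (i:ℕ) < m + 2 := i.isLt
    have hj : (j:ℕ) < m + 2 := j.isLt
    split_ifs <;>
      first
        | (exfalso; omega)
        | ((try simp only [map_neg, _root_.map_one, map_zero])
           first
             | ring1
             | (rw [show ((i:ℕ)) = 0 from by omega]; ring1)
             | (rw [show ((i:ℕ)) = m from by omega]; ring1)
             | (rw [show m = 0 from by omega]; ring1)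
             | (rw [show m = (i:ℕ) from by omega]; ring1))
  have key2 : L.charpoly = ∑ k ∈ Finset.range (m+2),
      (-1:ℝ[X])^k * (if k = 0 then X + C (P 0) else if k = m+1 then C (y/2) else C (P k)) *
      X^(m+1-k) *
      ∏ i ∈ Finset.range k, (if i = m then -C (ε*(2*y)) else -(1:ℝ[X])) := by
    rw [Matrix.charpoly, hchar]
    exact hess_det (R := ℝ[X]) X (m+1)
      (fun k => if k = 0 then X + C (P 0) else if k = m+1 then C (y/2) else C (P k))
      (fun k => if k = m then -C (ε*(2*y)) else -(1:ℝ[X]))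
  rw [key2]
  clear key2 hchar hL
  have e2 : ∏ i ∈ Finset.range (m+1), (if i = m then -C (ε*(2*y)) else -(1:ℝ[X]))
      = (-1:ℝ[X])^m * (-C (ε*(2*y))) := by
    rw [Finset.prod_range_succ,
      Finset.prod_congr rfl (fun i hi => if_neg (by have := Finset.mem_range.mp hi; omega)),
      Finset.prod_const, Finset.card_range, if_pos rfl]
  have hsign : ((-1:ℝ[X]))^(m+1) * (-1:ℝ[X])^m = -1 := by
    rw [← pow_add, show m+1+m = 2*m+1 by omega]
    exact Odd.neg_one_pow ⟨m, by omega⟩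
  have hlast : (-1:ℝ[X])^(m+1) *
      (if m+1 = 0 then X + C (P 0) else if m+1 = m+1 then C (y/2) else C (P (m+1))) *
      X^(m+1-(m+1)) *
      ∏ i ∈ Finset.range (m+1), (if i = m then -C (ε*(2*y)) else -(1:ℝ[X]))
      = C (ε * y^2) := by
    rw [if_neg (Nat.succ_ne_zero m), if_pos rfl, e2, Nat.sub_self, pow_zero]
    calc (-1:ℝ[X])^(m+1) * C (y/2) * 1 * ((-1:ℝ[X])^m * -C (ε*(2*y)))
        = ((-1:ℝ[X])^(m+1) * (-1:ℝ[X])^m) * -(C (y/2) * C (ε*(2*y))) := by ring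
      _ = C (y/2) * C (ε*(2*y)) := by rw [hsign]; ring
      _ = C ((y/2) * (ε*(2*y))) := by rw [← C_mul]
      _ = C (ε * y^2) := by rw [show (y/2) * (ε*(2*y)) = ε * y^2 by ring]
  have hmain : ∀ k ∈ Finset.range (m+1),
      (-1:ℝ[X])^k * (if k = 0 then X + C (P 0) else if k = m+1 then C (y/2) else C (P k)) *
      X^(m+1-k) *
      ∏ i ∈ Finset.range k, (if i = m then -C (ε*(2*y)) else -(1:ℝ[X]))
      = (if k = 0 then X + C (P 0) else C (P k)) * X^(m+1-k) := by
    intro k hk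
    have hkm : k < m + 1 := Finset.mem_range.mp hk
    rw [Finset.prod_congr rfl (fun i hi => if_neg (by have := Finset.mem_range.mp hi; omega)),
      Finset.prod_const, Finset.card_range]
    have hsq : ((-1:ℝ[X]))^k * (-1:ℝ[X])^k = 1 := by
      rw [← pow_add]
      exact Even.neg_one_pow ⟨k, by omega⟩
    have hA : (if k = 0 then X + C (P 0) else if k = m+1 then C (y/2) else C (P k))
        = (if k = 0 then X + C (P 0) else C (P k)) := by
      by_cases hk0 : k = 0
      · rw [if_pos hk0, if_pos hk0]
      · rw [if_neg hk0, if_neg (by omega), if_neg hk0]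
    rw [hA]
    calc (-1:ℝ[X])^k * (if k = 0 then X + C (P 0) else C (P k)) * X^(m+1-k) * (-1:ℝ[X])^k
        = ((-1:ℝ[X])^k * (-1:ℝ[X])^k) * ((if k = 0 then X + C (P 0) else C (P k)) * X^(m+1-k)) := by
          ring
      _ = (if k = 0 then X + C (P 0) else C (P k)) * X^(m+1-k) := by rw [hsq]; ring
  rw [show m + 2 = (m+1) + 1 from rfl, Finset.sum_range_succ, hlast,
    Finset.sum_congr rfl hmain, Finset.sum_range_succ']
  simp only [hm1, hm2]
  conv_rhs => rw [Finset.sum_range_succ']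
  have hstep : ∀ k ∈ Finset.range m,
      (if k + 1 = 0 then X + C (P 0) else C (P (k+1))) * X^(m+1-(k+1))
      = C (P (k+1)) * X^(m+1-(k+1)) := by
    intro k _
    rw [if_neg (Nat.succ_ne_zero k)]
  rw [Finset.sum_congr rfl hstep]
  simp only [if_true, ite_true]
  have hx2 : (X + C (P 0)) * X^(m+1-0) = X^(m+2) + C (P 0) * X^(m+1-0) := by
    rw [Nat.sub_zero, add_mul, ← pow_succ']
  rw [hx2]
  ring
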